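/- arXiv:1803.04094 — 2 statements merged into one kernel-verified Lean document; each statement's English description precedes it below -/
import Mathlib

section
/- The functional H̄ is strictly concave on H²_T: for any ν, ω ∈ H²_T such that (P × Leb)({(ω̃,t) : ν_t ≠ ω_t}) > 0, and any ρ ∈ (0,1), it holds that H̄(ρν + (1−ρ)ω) > ρ H̄(ν) + (1−ρ) H̄(ω). -/
open MeasureTheory Set
open scoped ENNReal

/-- The controlled inventory process `q^ν_t = Q₀ + ∫₀ᵗ ν_u du`. -/
noncomputable def inventory {Ω : Type*} (Q0 : Ω → ℝ) (ν : ℝ → Ω → ℝ) (t : ℝ) (ω : Ω) : ℝ :=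
  Q0 ω + ∫ u in (0 : ℝ)..t, ν u ω

/-- The objective functional
`H̄(ν) = E[∫₀ᵀ ( q^ν_t (Â_t + λ ν̄_t) − a ν_t² − 2Ψ ν_t q^ν_t − φ (q^ν_t)² ) dt]`. -/
noncomputable def Hbar {Ω : Type*} [MeasurableSpace Ω] (P : Measure Ω) (T : ℝ)
    (Ahat nubar : ℝ → Ω → ℝ) (l a φ Ψ : ℝ) (Q0 : Ω → ℝ) (ν : ℝ → Ω → ℝ) : ℝ :=
  ∫ ω, (∫ t in Icc (0 : ℝ) T,
      (inventory Q0 ν t ω * (Ahat t ω + l * nubar t ω) - a * (ν t ω) ^ 2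
        - 2 * Ψ * ν t ω * inventory Q0 ν t ω - φ * (inventory Q0 ν t ω) ^ 2)) ∂P

set_option linter.unusedVariables false
set_option linter.unusedSectionVars false
set_option maxHeartbeats 1000000

section Helpers
variable {α : Type*} [MeasurableSpace α] {μ' : Measure α}
open MeasureTheory Set
open scoped ENNReal

variable {α : Type*} [MeasurableSpace α] {μ' : Measure α}

lemma sq_hfi_iff {f : α → ℝ} :
    HasFiniteIntegral (fun x => f x ^ 2) μ' ↔ (∫⁻ x, ENNReal.ofReal (f x ^ 2) ∂μ') < ⊤ := by
  rw [hasFiniteIntegral_iff_norm]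
  refine ⟨fun h => ?_, fun h => ?_⟩ <;>
    refine lt_of_le_of_lt (le_of_eq (lintegral_congr fun x => ?_)) ‹_› <;>
    rw [Real.norm_eq_abs, abs_of_nonneg (sq_nonneg _)]

lemma memL2_of_sq_lintegral {f : α → ℝ} (hm : AEStronglyMeasurable f μ')
    (h : (∫⁻ x, ENNReal.ofReal (f x ^ 2) ∂μ') < ⊤) : MemLp f 2 μ' := by
  rw [memLp_two_iff_integrable_sq hm]
  exact ⟨(hm.mul hm).congr (Filter.Eventually.of_forall fun x => by simp [sq]),
    sq_hfi_iff.mpr h⟩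

lemma sq_lintegral_of_memL2 {f : α → ℝ} (h : MemLp f 2 μ') :
    (∫⁻ x, ENNReal.ofReal (f x ^ 2) ∂μ') < ⊤ :=
  sq_hfi_iff.mp h.integrable_sq.2

lemma integrable_mul_of_memL2 {f g : α → ℝ} (hf : MemLp f 2 μ') (hg : MemLp g 2 μ') :
    Integrable (fun x => f x * g x) μ' := by
  refine (hf.integrable_sq.add hg.integrable_sq).mono'
    (hf.aestronglyMeasurable.mul hg.aestronglyMeasurable) ?_
  filter_upwards with x
  show ‖f x * g x‖ ≤ f x ^ 2 + g x ^ 2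
  rw [norm_mul, Real.norm_eq_abs, Real.norm_eq_abs]
  nlinarith [sq_nonneg (|f x| - |g x|), sq_abs (f x), sq_abs (g x), abs_nonneg (f x),
    abs_nonneg (g x), mul_nonneg (abs_nonneg (f x)) (abs_nonneg (g x))]

lemma cs_ineq [IsFiniteMeasure μ'] {f : α → ℝ} (hf : MemLp f 2 μ') :
    (∫ x, |f x| ∂μ') ^ 2 ≤ (μ' univ).toReal * ∫ x, f x ^ 2 ∂μ' := by
  set M := (μ' univ).toReal with hM
  have hM0 : 0 ≤ M := ENNReal.toReal_nonneg
  set S := ∫ x, f x ^ 2 ∂μ' with hS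
  have hS0 : 0 ≤ S := integral_nonneg fun x => sq_nonneg _
  have hfi : Integrable (fun x => |f x|) μ' := (hf.integrable one_le_two).abs
  have hfI0 : 0 ≤ ∫ x, |f x| ∂μ' := integral_nonneg fun x => abs_nonneg _
  have key : ∀ c : ℝ, 0 < c → ∫ x, |f x| ∂μ' ≤ (c * S + M / c) / 2 := by
    intro c hc
    have hb : ∀ x, |f x| ≤ (c * f x ^ 2 + 1 / c) / 2 := fun x => by
      rw [le_div_iff₀ (by norm_num : (0:ℝ) < 2), ← sub_nonneg]
      have h1 : c * f x ^ 2 + 1 / c - |f x| * 2 = (c * |f x| - 1) ^ 2 / c := by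
        field_simp
        linear_combination (-(c ^ 2)) * (sq_abs (f x))
      rw [h1]
      positivity
    calc ∫ x, |f x| ∂μ' ≤ ∫ x, (c * f x ^ 2 + 1 / c) / 2 ∂μ' := by
          refine integral_mono hfi ?_ hb
          exact (((hf.integrable_sq.const_mul c).add (integrable_const _)).div_const 2)
      _ = (c * S + M / c) / 2 := by
          rw [integral_div, integral_add (hf.integrable_sq.const_mul c) (integrable_const _),
            integral_const_mul, integral_const, smul_eq_mul, measureReal_def, hM, ← hS]
          ring
  by_cases hS' : S = 0
  · have hz : ∀ᵐ x ∂μ', f x ^ 2 = 0 :=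
      (integral_eq_zero_iff_of_nonneg (fun x => sq_nonneg (f x)) hf.integrable_sq).mp hS'
    have h0 : ∫ x, |f x| ∂μ' = 0 := by
      rw [integral_eq_zero_iff_of_nonneg (fun x => abs_nonneg (f x)) hfi]
      filter_upwards [hz] with x hx
      simpa [abs_eq_zero] using pow_eq_zero_iff (n := 2) (by norm_num) |>.mp hx
    rw [h0, hS']
    simp
  · have hSpos : 0 < S := lt_of_le_of_ne hS0 (Ne.symm hS')
    set r := Real.sqrt (M / S) with hr
    by_cases hM' : M = 0
    · -- M = 0: then all c → 0 bound: ∫|f| ≤ c S/2 for all c>0 ⇒ ∫|f| ≤ 0 ⇒ = 0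
      have h0 : ∫ x, |f x| ∂μ' = 0 := by
        have : ∀ ε : ℝ, 0 < ε → ∫ x, |f x| ∂μ' ≤ ε := by
          intro ε hε
          have := key (2 * ε / S) (by positivity)
          rw [hM'] at this
          calc ∫ x, |f x| ∂μ' ≤ (2 * ε / S * S + 0 / (2 * ε / S)) / 2 := this
            _ = ε := by field_simp; ring
        exact le_antisymm (le_of_forall_pos_le_add (fun ε hε => by linarith [this ε hε])) hfI0
      rw [h0, hM']
      simp [hS0]
    · have hMpos : 0 < M := lt_of_le_of_ne hM0 (Ne.symm hM')
      have hc : 0 < r := Real.sqrt_pos.mpr (by positivity)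
      have hsq : r ^ 2 = M / S := Real.sq_sqrt (by positivity : (0:ℝ) ≤ M / S)
      have hrS : r ^ 2 * S = M := by rw [hsq]; field_simp
      have hMr : M / r = r * S := by
        rw [div_eq_iff hc.ne']
        linear_combination -hrS
      have hle : ∫ x, |f x| ∂μ' ≤ r * S := by
        refine (key r hc).trans (le_of_eq ?_)
        rw [hMr]; ring
      have h2 : (∫ x, |f x| ∂μ') ^ 2 ≤ (r * S) ^ 2 := by
        have := mul_self_le_mul_self hfI0 hle
        simpa [pow_two] using this
      have h3 : (r * S) ^ 2 = M * S := by
        rw [mul_pow]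
        linear_combination S * hrS
      linarith

end Helpers

lemma sq_half {T : ℝ} (hT : 0 ≤ T) {f : ℝ → ℝ}
    (hf : IntegrableOn f (Icc (0:ℝ) T)) :
    (∫ t in Icc (0:ℝ) T, f t * ∫ u in (0:ℝ)..t, f u)
      = (∫ u in (0:ℝ)..T, f u) ^ 2 / 2 := by
  set μ := volume.restrict (Icc (0:ℝ) T) with hμ
  have hfμ : Integrable f μ := hf
  have hprim : ∀ t ∈ Icc (0:ℝ) T,
      (∫ u in (0:ℝ)..t, f u) = ∫ u, (Iic t).indicator f u ∂μ := by
    intro t ht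
    rw [hμ, integral_indicator measurableSet_Iic, Measure.restrict_restrict measurableSet_Iic]
    have hset : Iic t ∩ Icc 0 T = Icc 0 t := by
      ext u
      simp only [mem_inter_iff, mem_Iic, mem_Icc]
      exact ⟨fun h => ⟨h.2.1, h.1⟩, fun h => ⟨h.2, h.1, h.2.trans ht.2⟩⟩
    rw [hset, intervalIntegral.integral_of_le ht.1, integral_Icc_eq_integral_Ioc]
  set F : ℝ × ℝ → ℝ := fun p => f p.1 * f p.2 with hF
  have hFint : Integrable F (μ.prod μ) := hfμ.mul_prod hfμ
  set s : Set (ℝ × ℝ) := {p | p.2 ≤ p.1} with hs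
  set s' : Set (ℝ × ℝ) := {p | p.1 ≤ p.2} with hs'
  set d : Set (ℝ × ℝ) := {p | p.1 = p.2} with hd
  have hsm : MeasurableSet s := measurableSet_le measurable_snd measurable_fst
  have hs'm : MeasurableSet s' := measurableSet_le measurable_fst measurable_snd
  have hdm : MeasurableSet d := measurableSet_eq_fun measurable_fst measurable_snd
  have hint1 : Integrable (s.indicator F) (μ.prod μ) := hFint.indicator hsm
  have hint2 : Integrable (s'.indicator F) (μ.prod μ) := hFint.indicator hs'm
  have hA : (∫ p, s.indicator F p ∂(μ.prod μ))
      = ∫ t in Icc (0:ℝ) T, f t * ∫ u in (0:ℝ)..t, f u := by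
    rw [MeasureTheory.integral_prod _ hint1]
    refine integral_congr_ae ?_
    filter_upwards [ae_restrict_mem measurableSet_Icc] with t ht
    have heq : ∀ u, s.indicator F (t, u) = (Iic t).indicator (fun u => f t * f u) u := by
      intro u
      by_cases h : u ≤ t <;> simp [hs, hF, indicator, h]
    calc (∫ u, s.indicator F (t, u) ∂μ) = ∫ u, (Iic t).indicator (fun u => f t * f u) u ∂μ := by
          exact integral_congr_ae (Filter.Eventually.of_forall heq)
      _ = ∫ u in Iic t, f t * f u ∂μ := by rw [integral_indicator measurableSet_Iic]
      _ = f t * ∫ u in Iic t, f u ∂μ := by rw [integral_const_mul]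
      _ = f t * ∫ u, (Iic t).indicator f u ∂μ := by rw [integral_indicator measurableSet_Iic]
      _ = f t * ∫ u in (0:ℝ)..t, f u := by rw [hprim t ht]
  have hswap : (∫ p, s'.indicator F p ∂(μ.prod μ)) = ∫ p, s.indicator F p ∂(μ.prod μ) := by
    rw [← integral_prod_swap (s'.indicator F)]
    refine integral_congr_ae (Filter.Eventually.of_forall fun p => ?_)
    by_cases h : p.2 ≤ p.1
    · simp [hs, hs', hF, indicator, h, Prod.swap, mul_comm]
    · simp [hs, hs', hF, indicator, h, Prod.swap, mul_comm]
  have hsum : ∀ p : ℝ × ℝ, s.indicator F p + s'.indicator F p = F p + d.indicator F p := by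
    intro p
    by_cases h1 : p.2 ≤ p.1 <;> by_cases h2 : p.1 ≤ p.2
    · have : p.1 = p.2 := le_antisymm h2 h1
      simp [indicator, hs, hs', hd, h1, h2, this]
    · have : ¬ p.1 = p.2 := fun h => h2 h.le
      simp [indicator, hs, hs', hd, h1, h2, this]
    · have : ¬ p.1 = p.2 := fun h => h1 h.ge
      simp [indicator, hs, hs', hd, h1, h2, this]
    · exact absurd (le_total p.2 p.1) (by simp [h1, h2])
  have hdiagnull : (μ.prod μ) d = 0 := by
    rw [Measure.prod_apply hdm]
    have hpre : ∀ x : ℝ, (Prod.mk x ⁻¹' d) = {x} := by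
      intro x; ext y; simp [hd, eq_comm]
    have : ∀ x : ℝ, μ (Prod.mk x ⁻¹' d) = 0 := by
      intro x
      rw [hpre x, hμ, Measure.restrict_apply (measurableSet_singleton x)]
      exact measure_mono_null inter_subset_left (measure_singleton x)
    simp [this]
  have hdiag0 : (∫ p, d.indicator F p ∂(μ.prod μ)) = 0 := by
    rw [integral_indicator hdm, Measure.restrict_eq_zero.mpr hdiagnull, integral_zero_measure]
  have htot : (∫ p, F p ∂(μ.prod μ)) = (∫ t, f t ∂μ) * ∫ t, f t ∂μ := integral_prod_mul f f
  have hIT : (∫ u in (0:ℝ)..T, f u) = ∫ t, f t ∂μ := by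
    rw [intervalIntegral.integral_of_le hT, hμ, ← integral_Icc_eq_integral_Ioc]
  have hcomb : (∫ p, s.indicator F p ∂(μ.prod μ)) + ∫ p, s'.indicator F p ∂(μ.prod μ)
      = (∫ t, f t ∂μ) * ∫ t, f t ∂μ := by
    rw [← integral_add hint1 hint2]
    rw [integral_congr_ae (Filter.Eventually.of_forall hsum)]
    rw [integral_add hFint (hFint.indicator hdm), hdiag0, htot, add_zero]
  rw [← hA, hIT]
  rw [hswap] at hcomb
  linarith [hcomb]

instance restr_finite (T : ℝ) : IsFiniteMeasure (volume.restrict (Icc (0:ℝ) T)) := by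
  constructor
  rw [Measure.restrict_apply_univ, Real.volume_Icc]
  exact ENNReal.ofReal_lt_top

section Det

variable {T : ℝ}

/-- Auxiliary: the running integrand of the objective, for a single path. -/
noncomputable def eR (aa φ Ψ q0 : ℝ) (A h : ℝ → ℝ) (t : ℝ) : ℝ :=
  (q0 + ∫ u in (0:ℝ)..t, h u) * A t - aa * h t ^ 2
    - 2 * Ψ * h t * (q0 + ∫ u in (0:ℝ)..t, h u) - φ * (q0 + ∫ u in (0:ℝ)..t, h u) ^ 2

lemma prim_facts (hT : (0:ℝ) ≤ T) {h : ℝ → ℝ}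
    (hh : MemLp h 2 (volume.restrict (Icc (0:ℝ) T))) (q0 : ℝ) :
    AEStronglyMeasurable (fun t => q0 + ∫ u in (0:ℝ)..t, h u) (volume.restrict (Icc (0:ℝ) T))
    ∧ (∀ᵐ t ∂(volume.restrict (Icc (0:ℝ) T)),
        ‖q0 + ∫ u in (0:ℝ)..t, h u‖ ≤ |q0| + ∫ u in Icc (0:ℝ) T, |h u|)
    ∧ Integrable (fun t => q0 + ∫ u in (0:ℝ)..t, h u) (volume.restrict (Icc (0:ℝ) T)) := by
  have hI : Integrable h (volume.restrict (Icc (0:ℝ) T)) := hh.integrable one_le_two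
  have hIOn : IntegrableOn h (Icc (0:ℝ) T) := hI
  have hcont : ContinuousOn (fun t => q0 + ∫ u in (0:ℝ)..t, h u) (Icc (0:ℝ) T) := by
    refine continuousOn_const.add ?_
    have := intervalIntegral.continuousOn_primitive_interval
      (f := h) (μ := volume) (a := (0:ℝ)) (b := T) ?_
    · rwa [uIcc_of_le hT] at this
    · rwa [uIcc_of_le hT]
  have hmeas : AEStronglyMeasurable (fun t => q0 + ∫ u in (0:ℝ)..t, h u)
      (volume.restrict (Icc (0:ℝ) T)) := hcont.aestronglyMeasurable measurableSet_Icc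
  have hbd : ∀ᵐ t ∂(volume.restrict (Icc (0:ℝ) T)),
      ‖q0 + ∫ u in (0:ℝ)..t, h u‖ ≤ |q0| + ∫ u in Icc (0:ℝ) T, |h u| := by
    filter_upwards [ae_restrict_mem measurableSet_Icc] with t ht
    have h1 : |∫ u in (0:ℝ)..t, h u| ≤ ∫ u in Icc (0:ℝ) T, |h u| := by
      rw [intervalIntegral.integral_of_le ht.1, ← Real.norm_eq_abs]
      refine (norm_integral_le_integral_norm _).trans (le_of_le_of_eq ?_ rfl)
      simp_rw [Real.norm_eq_abs]
      refine setIntegral_mono_set hIOn.abs ?_ ?_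
      · exact Filter.Eventually.of_forall fun u => abs_nonneg _
      · exact HasSubset.Subset.eventuallyLE fun u hu => ⟨le_of_lt hu.1, hu.2.trans ht.2⟩
    calc ‖q0 + ∫ u in (0:ℝ)..t, h u‖ ≤ |q0| + |∫ u in (0:ℝ)..t, h u| := abs_add_le _ _
      _ ≤ |q0| + ∫ u in Icc (0:ℝ) T, |h u| := by linarith
  refine ⟨hmeas, hbd, ?_⟩
  exact (integrable_const _).mono' hmeas hbd

lemma det_int (hT : (0:ℝ) ≤ T) {aa φ Ψ : ℝ} {h A : ℝ → ℝ} (q0 : ℝ)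
    (hh : MemLp h 2 (volume.restrict (Icc (0:ℝ) T)))
    (hA : MemLp A 2 (volume.restrict (Icc (0:ℝ) T))) :
    Integrable (eR aa φ Ψ q0 A h) (volume.restrict (Icc (0:ℝ) T)) := by
  obtain ⟨hqm, hqb, hqi⟩ := prim_facts hT hh q0
  set μ := volume.restrict (Icc (0:ℝ) T)
  set q : ℝ → ℝ := fun t => q0 + ∫ u in (0:ℝ)..t, h u with hq
  have hIA : Integrable A μ := hA.integrable one_le_two
  have hIh : Integrable h μ := hh.integrable one_le_two
  have T1 : Integrable (fun t => q t * A t) μ := hIA.bdd_mul hqm hqb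
  have T2 : Integrable (fun t => aa * h t ^ 2) μ := hh.integrable_sq.const_mul aa
  have hqh : Integrable (fun t => q t * h t) μ := hIh.bdd_mul hqm hqb
  have T3 : Integrable (fun t => 2 * Ψ * h t * q t) μ := by
    refine (hqh.const_mul (2 * Ψ)).congr ?_
    exact Filter.Eventually.of_forall fun t => by ring
  have hqq : Integrable (fun t => q t * q t) μ := hqi.bdd_mul hqm hqb
  have T4 : Integrable (fun t => φ * q t ^ 2) μ := by
    refine (hqq.const_mul φ).congr ?_
    exact Filter.Eventually.of_forall fun t => by ring
  have := ((T1.sub T2).sub T3).sub T4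
  exact this.congr (Filter.Eventually.of_forall fun t => rfl)

end Det

section DetGap
variable {T : ℝ}

lemma det_gap (hT : (0:ℝ) ≤ T) {aa φ Ψ ρ : ℝ} (haa : 0 ≤ aa) (hφ : 0 ≤ φ) (hΨ : 0 ≤ Ψ)
    (hρ0 : 0 ≤ ρ) (hρ1 : ρ ≤ 1) {f g A : ℝ → ℝ} (q0 : ℝ)
    (hf : MemLp f 2 (volume.restrict (Icc (0:ℝ) T)))
    (hg : MemLp g 2 (volume.restrict (Icc (0:ℝ) T)))
    (hA : MemLp A 2 (volume.restrict (Icc (0:ℝ) T))) :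
    ρ * (∫ t in Icc (0:ℝ) T, eR aa φ Ψ q0 A f t)
      + (1 - ρ) * (∫ t in Icc (0:ℝ) T, eR aa φ Ψ q0 A g t)
      + ρ * (1 - ρ) * aa * (∫ t in Icc (0:ℝ) T, (f t - g t) ^ 2)
      ≤ ∫ t in Icc (0:ℝ) T, eR aa φ Ψ q0 A (fun u => ρ * f u + (1 - ρ) * g u) t := by
  set μ := volume.restrict (Icc (0:ℝ) T) with hμdef
  have hm : MemLp (fun u => ρ * f u + (1 - ρ) * g u) 2 μ :=
    (hf.const_mul ρ).add (hg.const_mul (1 - ρ))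
  have hδ : MemLp (fun u => f u - g u) 2 μ := hf.sub hg
  have hfInt : ∀ t ∈ Icc (0:ℝ) T, IntervalIntegrable f volume 0 t := by
    intro t ht
    refine IntegrableOn.intervalIntegrable ((show IntegrableOn f (Icc (0:ℝ) T) volume from hf.integrable one_le_two).mono_set ?_)
    rw [uIcc_of_le ht.1]
    exact Icc_subset_Icc le_rfl ht.2
  have hgInt : ∀ t ∈ Icc (0:ℝ) T, IntervalIntegrable g volume 0 t := by
    intro t ht
    refine IntegrableOn.intervalIntegrable ((show IntegrableOn g (Icc (0:ℝ) T) volume from hg.integrable one_le_two).mono_set ?_)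
    rw [uIcc_of_le ht.1]
    exact Icc_subset_Icc le_rfl ht.2
  set Qδ : ℝ → ℝ := fun t => ∫ u in (0:ℝ)..t, (f u - g u) with hQδdef
  set γ : ℝ → ℝ := fun t =>
    aa * (f t - g t) ^ 2 + (2 * Ψ) * ((f t - g t) * Qδ t) + φ * (Qδ t * Qδ t) with hγdef
  -- pointwise identity on Icc
  have key : ∀ t ∈ Icc (0:ℝ) T,
      eR aa φ Ψ q0 A (fun u => ρ * f u + (1 - ρ) * g u) t
        = ρ * eR aa φ Ψ q0 A f t + (1 - ρ) * eR aa φ Ψ q0 A g t + (ρ * (1 - ρ)) * γ t := by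
    intro t ht
    have e1 : (∫ u in (0:ℝ)..t, (ρ * f u + (1 - ρ) * g u))
        = ρ * (∫ u in (0:ℝ)..t, f u) + (1 - ρ) * ∫ u in (0:ℝ)..t, g u := by
      rw [intervalIntegral.integral_add ((hfInt t ht).const_mul ρ)
        ((hgInt t ht).const_mul (1 - ρ)), intervalIntegral.integral_const_mul,
        intervalIntegral.integral_const_mul]
    have e2 : Qδ t = (∫ u in (0:ℝ)..t, f u) - ∫ u in (0:ℝ)..t, g u :=
      intervalIntegral.integral_sub (hfInt t ht) (hgInt t ht)
    simp only [eR, hγdef, e1, e2]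
    ring
  -- integrability
  have Ef := det_int hT (aa := aa) (φ := φ) (Ψ := Ψ) q0 hf hA
  have Eg := det_int hT (aa := aa) (φ := φ) (Ψ := Ψ) q0 hg hA
  have Em := det_int hT (aa := aa) (φ := φ) (Ψ := Ψ) q0 hm hA
  obtain ⟨hQm0, hQb0, hQi0⟩ := prim_facts hT hδ 0
  have hQm : AEStronglyMeasurable Qδ μ := by
    refine hQm0.congr (Filter.Eventually.of_forall fun t => ?_)
    simp [hQδdef]
  have hQb : ∀ᵐ t ∂μ, ‖Qδ t‖ ≤ |(0:ℝ)| + ∫ u in Icc (0:ℝ) T, |f u - g u| := by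
    filter_upwards [hQb0] with t ht
    simpa using ht
  have hQi : Integrable Qδ μ := (integrable_const _).mono' hQm hQb
  have hδI : Integrable (fun t => f t - g t) μ := hδ.integrable one_le_two
  have G1 : Integrable (fun t => aa * (f t - g t) ^ 2) μ := hδ.integrable_sq.const_mul aa
  have G2 : Integrable (fun t => (2 * Ψ) * ((f t - g t) * Qδ t)) μ :=
    ((hδI.bdd_mul hQm hQb).congr
      (Filter.Eventually.of_forall fun t => by ring)).const_mul (2 * Ψ)
  have G3 : Integrable (fun t => φ * (Qδ t * Qδ t)) μ := (hQi.bdd_mul hQm hQb).const_mul φ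
  have Gint : Integrable γ μ := by
    refine ((G1.add G2).add G3).congr (Filter.Eventually.of_forall fun t => rfl)
  -- split the integral of eR of the mixture
  have split : (∫ t in Icc (0:ℝ) T, eR aa φ Ψ q0 A (fun u => ρ * f u + (1 - ρ) * g u) t)
      = ρ * (∫ t in Icc (0:ℝ) T, eR aa φ Ψ q0 A f t)
        + (1 - ρ) * (∫ t in Icc (0:ℝ) T, eR aa φ Ψ q0 A g t)
        + (ρ * (1 - ρ)) * ∫ t in Icc (0:ℝ) T, γ t := by
    rw [setIntegral_congr_fun measurableSet_Icc key]
    have I1 : Integrable (fun x => ρ * eR aa φ Ψ q0 A f x) μ := Ef.const_mul ρ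
    have I2 : Integrable (fun x => (1 - ρ) * eR aa φ Ψ q0 A g x) μ := Eg.const_mul (1 - ρ)
    have I12 : Integrable (fun x => ρ * eR aa φ Ψ q0 A f x + (1 - ρ) * eR aa φ Ψ q0 A g x) μ :=
      I1.add I2
    have I3 : Integrable (fun x => (ρ * (1 - ρ)) * γ x) μ := Gint.const_mul _
    rw [integral_add I12 I3, integral_add I1 I2,
      integral_const_mul, integral_const_mul, integral_const_mul]
  -- the cross term
  have cross : (∫ t in Icc (0:ℝ) T, (f t - g t) * Qδ t)
      = (∫ u in (0:ℝ)..T, (f u - g u)) ^ 2 / 2 := by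
    exact sq_half hT (hδ.integrable one_le_two)
  have hγsplit : (∫ t in Icc (0:ℝ) T, γ t)
      = aa * (∫ t in Icc (0:ℝ) T, (f t - g t) ^ 2)
        + (2 * Ψ) * ((∫ u in (0:ℝ)..T, (f u - g u)) ^ 2 / 2)
        + φ * ∫ t in Icc (0:ℝ) T, Qδ t * Qδ t := by
    have IG12 : Integrable (fun t => aa * (f t - g t) ^ 2
        + (2 * Ψ) * ((f t - g t) * Qδ t)) μ := G1.add G2
    rw [hγdef]
    rw [integral_add IG12 G3, integral_add G1 G2,
      integral_const_mul, integral_const_mul, integral_const_mul, cross]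
  have hQsq : 0 ≤ ∫ t in Icc (0:ℝ) T, Qδ t * Qδ t :=
    integral_nonneg fun t => mul_self_nonneg _
  rw [split, hγsplit]
  have hnn : 0 ≤ (ρ * (1 - ρ)) := mul_nonneg hρ0 (by linarith)
  nlinarith [sq_nonneg (∫ u in (0:ℝ)..T, (f u - g u)),
    mul_nonneg hnn (mul_nonneg hΨ (sq_nonneg (∫ u in (0:ℝ)..T, (f u - g u)))),
    mul_nonneg hnn (mul_nonneg hφ hQsq)]

end DetGap

lemma ae_fst_lift {Ω : Type*} [MeasurableSpace Ω] {P : Measure Ω} {μ : Measure ℝ} [SFinite P]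
    [SFinite μ] {pr : Ω → Prop} (h : ∀ᵐ ω ∂P, pr ω) :
    ∀ᵐ q ∂(P.prod μ), pr q.1 := by
  rw [ae_iff] at h ⊢
  obtain ⟨N, hsub, hNm, hN0⟩ := exists_measurable_superset_of_null h
  refine measure_mono_null (t := N ×ˢ (univ : Set ℝ)) (fun q hq => mem_prod.mpr ⟨hsub hq, mem_univ q.2⟩) ?_
  rw [Measure.prod_prod, hN0, zero_mul]

section Inv

variable {Ω : Type*} [MeasurableSpace Ω] (P : Measure Ω) [IsProbabilityMeasure P] {T : ℝ}

lemma sec_meas {F : ℝ → Ω → ℝ} (hFmeas : Measurable (Function.uncurry F)) (ω : Ω) :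
    Measurable (fun t => F t ω) :=
  hFmeas.comp (measurable_id.prodMk measurable_const)

lemma joint_ofReal_sq_meas {F : ℝ → Ω → ℝ} (hFmeas : Measurable (Function.uncurry F)) :
    Measurable (fun p : Ω × ℝ => ENNReal.ofReal (F p.2 p.1 ^ 2)) :=
  ENNReal.measurable_ofReal.comp ((hFmeas.comp measurable_swap).pow_const 2)

lemma good_ae (hT : (0:ℝ) ≤ T) {F : ℝ → Ω → ℝ} (hFmeas : Measurable (Function.uncurry F))
    (hF2 : (∫⁻ ω, (∫⁻ t in Icc (0 : ℝ) T, ENNReal.ofReal ((F t ω) ^ 2)) ∂P) < ⊤) :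
    ∀ᵐ ω ∂P, MemLp (fun t => F t ω) 2 (volume.restrict (Icc (0:ℝ) T)) := by
  have hmeasint : Measurable fun ω => ∫⁻ t, ENNReal.ofReal (F t ω ^ 2)
      ∂(volume.restrict (Icc (0:ℝ) T)) :=
    Measurable.lintegral_prod_right' (joint_ofReal_sq_meas hFmeas)
  filter_upwards [ae_lt_top hmeasint hF2.ne] with ω hω
  exact memL2_of_sq_lintegral ((sec_meas hFmeas ω).aestronglyMeasurable) hω

lemma memL2_joint (hT : (0:ℝ) ≤ T) {F : ℝ → Ω → ℝ} (hFmeas : Measurable (Function.uncurry F))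
    (hF2 : (∫⁻ ω, (∫⁻ t in Icc (0 : ℝ) T, ENNReal.ofReal ((F t ω) ^ 2)) ∂P) < ⊤) :
    MemLp (fun p : Ω × ℝ => F p.2 p.1) 2 (P.prod (volume.restrict (Icc (0:ℝ) T))) := by
  refine memL2_of_sq_lintegral ((hFmeas.comp measurable_swap).aestronglyMeasurable) ?_
  rw [lintegral_prod _ (joint_ofReal_sq_meas hFmeas).aemeasurable]
  exact hF2

lemma inv_memL2 (hT : (0:ℝ) ≤ T) {F : ℝ → Ω → ℝ} (hFmeas : Measurable (Function.uncurry F))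
    {Q0 : Ω → ℝ} (hQ0m : StronglyMeasurable Q0) (hQ0 : MemLp Q0 2 P)
    (hF2 : (∫⁻ ω, (∫⁻ t in Icc (0 : ℝ) T, ENNReal.ofReal ((F t ω) ^ 2)) ∂P) < ⊤) :
    MemLp (fun p : Ω × ℝ => inventory Q0 F p.2 p.1) 2
      (P.prod (volume.restrict (Icc (0:ℝ) T))) := by
  set μ := volume.restrict (Icc (0:ℝ) T) with hμdef
  set π := P.prod μ with hπdef
  have hμfin : μ univ < ⊤ := measure_lt_top μ univ
  set G : (Ω × ℝ) × ℝ → ℝ := fun q => if q.2 ≤ q.1.2 then F q.2 q.1.1 else 0 with hGdef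
  have hGmeas : Measurable G := by
    refine Measurable.ite ?_ ?_ measurable_const
    · exact measurableSet_le measurable_snd (measurable_fst.snd)
    · exact hFmeas.comp (measurable_snd.prodMk measurable_fst.fst)
  set R : Ω × ℝ → ℝ := fun p => ∫ u in Icc (0:ℝ) T, G (p, u) with hRdef
  have hRmeas : StronglyMeasurable R := hGmeas.stronglyMeasurable.integral_prod_right'
  have hid : ∀ p : Ω × ℝ, p.2 ∈ Icc (0:ℝ) T → inventory Q0 F p.2 p.1 = Q0 p.1 + R p := by
    intro p hp
    unfold inventory
    congr 1
    have hind : ∀ u, G (p, u) = (Iic p.2).indicator (fun u => F u p.1) u := by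
      intro u; by_cases h : u ≤ p.2 <;> simp [hGdef, indicator, h]
    have h1 : R p = ∫ u in Icc (0:ℝ) T ∩ Iic p.2, F u p.1 := by
      rw [hRdef]
      simp only [hind]
      rw [setIntegral_indicator measurableSet_Iic]
    have hseteq : Icc (0:ℝ) T ∩ Iic p.2 = Icc (0:ℝ) p.2 := by
      ext u
      simp only [mem_inter_iff, mem_Icc, mem_Iic]
      exact ⟨fun h => ⟨h.1.1, h.2⟩, fun h => ⟨⟨h.1, h.2.trans hp.2⟩, h.2⟩⟩
    rw [h1, hseteq, integral_Icc_eq_integral_Ioc, ← intervalIntegral.integral_of_le hp.1]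
  have hae2 : ∀ᵐ p ∂π, p.2 ∈ Icc (0:ℝ) T := by
    rw [ae_iff]
    have hset : {p : Ω × ℝ | ¬ p.2 ∈ Icc (0:ℝ) T} = (univ : Set Ω) ×ˢ (Icc (0:ℝ) T)ᶜ := by
      ext p; simp
    rw [hπdef, hset, Measure.prod_prod]
    have : μ ((Icc (0:ℝ) T)ᶜ) = 0 := by
      rw [hμdef, Measure.restrict_apply measurableSet_Icc.compl, compl_inter_self]
      simp
    rw [this, mul_zero]
  have haeeq : (fun p : Ω × ℝ => Q0 p.1 + R p) =ᵐ[π] fun p => inventory Q0 F p.2 p.1 := by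
    filter_upwards [hae2] with p hp
    exact (hid p hp).symm
  refine MemLp.ae_eq haeeq ?_
  have hQ0fst : MemLp (fun p : Ω × ℝ => Q0 p.1) 2 π := by
    refine memL2_of_sq_lintegral
      ((hQ0m.comp_measurable measurable_fst).aestronglyMeasurable) ?_
    have hQm : Measurable fun ω => ENNReal.ofReal (Q0 ω ^ 2) :=
      ENNReal.measurable_ofReal.comp (hQ0m.measurable.pow_const 2)
    have hQm2 : Measurable fun p : Ω × ℝ => ENNReal.ofReal (Q0 p.1 ^ 2) :=
      hQm.comp measurable_fst
    rw [hπdef, lintegral_prod _ hQm2.aemeasurable]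
    calc ∫⁻ ω, ∫⁻ _, ENNReal.ofReal (Q0 ω ^ 2) ∂μ ∂P
        = ∫⁻ ω, ENNReal.ofReal (Q0 ω ^ 2) * μ univ ∂P := by
          refine lintegral_congr fun ω => ?_
          rw [lintegral_const]
      _ = (∫⁻ ω, ENNReal.ofReal (Q0 ω ^ 2) ∂P) * μ univ := lintegral_mul_const _ hQm
      _ < ⊤ := ENNReal.mul_lt_top (sq_lintegral_of_memL2 hQ0) hμfin
  have hRL2 : MemLp R 2 π := by
    refine memL2_of_sq_lintegral hRmeas.aestronglyMeasurable ?_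
    have hgood := good_ae P hT hFmeas hF2
    have hgoodπ : ∀ᵐ p ∂π, MemLp (fun t => F t p.1) 2 μ := ae_fst_lift hgood
    have hbd : ∀ᵐ p ∂π, ENNReal.ofReal (R p ^ 2)
        ≤ ENNReal.ofReal ((μ univ).toReal) * ∫⁻ t, ENNReal.ofReal (F t p.1 ^ 2) ∂μ := by
      filter_upwards [hgoodπ] with p hp
      have hint : Integrable (fun u => |F u p.1|) μ := (hp.integrable one_le_two).abs
      have h1 : |R p| ≤ ∫ u in Icc (0:ℝ) T, |F u p.1| := by
        rw [hRdef, ← Real.norm_eq_abs]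
        refine (norm_integral_le_integral_norm _).trans ?_
        refine integral_mono_of_nonneg (Filter.Eventually.of_forall fun u => norm_nonneg _)
          hint (Filter.Eventually.of_forall fun u => ?_)
        by_cases h : u ≤ p.2 <;> simp [hGdef, h, abs_nonneg]
      have hcs := cs_ineq hp
      have h2 : R p ^ 2 ≤ (μ univ).toReal * ∫ u, F u p.1 ^ 2 ∂μ := by
        have habs : R p ^ 2 = |R p| ^ 2 := (sq_abs _).symm
        have h3 : |R p| ^ 2 ≤ (∫ u, |F u p.1| ∂μ) ^ 2 := by
          have h0 : (0:ℝ) ≤ |R p| := abs_nonneg _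
          have h4 : (0:ℝ) ≤ ∫ u, |F u p.1| ∂μ := integral_nonneg fun u => abs_nonneg _
          nlinarith [h1]
        calc R p ^ 2 = |R p| ^ 2 := habs
          _ ≤ (∫ u, |F u p.1| ∂μ) ^ 2 := h3
          _ ≤ (μ univ).toReal * ∫ u, F u p.1 ^ 2 ∂μ := hcs
      calc ENNReal.ofReal (R p ^ 2)
          ≤ ENNReal.ofReal ((μ univ).toReal * ∫ u, F u p.1 ^ 2 ∂μ) := ENNReal.ofReal_le_ofReal h2
        _ = ENNReal.ofReal ((μ univ).toReal) * ENNReal.ofReal (∫ u, F u p.1 ^ 2 ∂μ) :=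
            ENNReal.ofReal_mul ENNReal.toReal_nonneg
        _ = ENNReal.ofReal ((μ univ).toReal) * ∫⁻ t, ENNReal.ofReal (F t p.1 ^ 2) ∂μ := by
            rw [ofReal_integral_eq_lintegral_ofReal hp.integrable_sq
              (Filter.Eventually.of_forall fun u => sq_nonneg _)]
    have hinner : Measurable fun ω => ∫⁻ t, ENNReal.ofReal (F t ω ^ 2) ∂μ :=
      Measurable.lintegral_prod_right' (joint_ofReal_sq_meas hFmeas)
    have hinner1 : Measurable fun p : Ω × ℝ => ∫⁻ t, ENNReal.ofReal (F t p.1 ^ 2) ∂μ :=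
      hinner.comp measurable_fst
    calc ∫⁻ p, ENNReal.ofReal (R p ^ 2) ∂π
        ≤ ∫⁻ p, ENNReal.ofReal ((μ univ).toReal)
            * ∫⁻ t, ENNReal.ofReal (F t p.1 ^ 2) ∂μ ∂π := lintegral_mono_ae hbd
      _ = ENNReal.ofReal ((μ univ).toReal)
            * ∫⁻ p, (∫⁻ t, ENNReal.ofReal (F t p.1 ^ 2) ∂μ) ∂π := by
          rw [lintegral_const_mul _ hinner1]
      _ = ENNReal.ofReal ((μ univ).toReal)
            * ∫⁻ ω, ∫⁻ _, (∫⁻ t, ENNReal.ofReal (F t ω ^ 2) ∂μ) ∂μ ∂P := by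
          rw [hπdef, lintegral_prod _ hinner1.aemeasurable]
      _ = ENNReal.ofReal ((μ univ).toReal)
            * ∫⁻ ω, (∫⁻ t, ENNReal.ofReal (F t ω ^ 2) ∂μ) * μ univ ∂P := by
          congr 1
          exact lintegral_congr fun ω => lintegral_const _
      _ = ENNReal.ofReal ((μ univ).toReal)
            * ((∫⁻ ω, (∫⁻ t, ENNReal.ofReal (F t ω ^ 2) ∂μ) ∂P) * μ univ) := by
          rw [lintegral_mul_const _ hinner]
      _ < ⊤ := by
          refine ENNReal.mul_lt_top ENNReal.ofReal_lt_top (ENNReal.mul_lt_top hF2 hμfin)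
  exact hQ0fst.add hRL2

end Inv


lemma E_int {α : Type*} [MeasurableSpace α] {m : Measure α} (a φ Ψ : ℝ) {q F A : α → ℝ}
    (hq : MemLp q 2 m) (hF : MemLp F 2 m) (hA : MemLp A 2 m) :
    Integrable (fun x => q x * A x - a * F x ^ 2 - 2 * Ψ * F x * q x - φ * q x ^ 2) m := by
  have P1 := integrable_mul_of_memL2 hq hA
  have P2 := hF.integrable_sq.const_mul a
  have P3 := (integrable_mul_of_memL2 hF hq).const_mul (2 * Ψ)
  have P4 := hq.integrable_sq.const_mul φ
  exact (((P1.sub P2).sub P3).sub P4).congr (Filter.Eventually.of_forall fun p => by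
    simp only [Pi.add_apply, Pi.sub_apply, Pi.neg_apply]
    ring)

/-- The functional `H̄` is strictly concave on `H²_T`. -/
theorem stmt_2 {Ω : Type*} {m0 : MeasurableSpace Ω} (P : Measure Ω) [IsProbabilityMeasure P]
    (T : ℝ) (hT : 0 < T)
    (Ahat nubar : ℝ → Ω → ℝ)
    (hAhatmeas : Measurable (Function.uncurry Ahat))
    (hnubarmeas : Measurable (Function.uncurry nubar))
    (hAhat2 : (∫⁻ ω, (∫⁻ t in Icc (0 : ℝ) T, ENNReal.ofReal ((Ahat t ω) ^ 2)) ∂P) < ⊤)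
    (hnubar2 : (∫⁻ ω, (∫⁻ t in Icc (0 : ℝ) T, ENNReal.ofReal ((nubar t ω) ^ 2)) ∂P) < ⊤)
    (l a φ Ψ : ℝ) (ha : 0 < a) (hφ : 0 ≤ φ) (hΨ : 0 < Ψ)
    (Q0 : Ω → ℝ) (hQ0 : MemLp Q0 2 P)
    (ν w : ℝ → Ω → ℝ)
    (hνmeas : Measurable (Function.uncurry ν))
    (hwmeas : Measurable (Function.uncurry w))
    (hν2 : (∫⁻ ω, (∫⁻ t in Icc (0 : ℝ) T, ENNReal.ofReal ((ν t ω) ^ 2)) ∂P) < ⊤)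
    (hw2 : (∫⁻ ω, (∫⁻ t in Icc (0 : ℝ) T, ENNReal.ofReal ((w t ω) ^ 2)) ∂P) < ⊤)
    (hdiff : 0 < (P.prod (volume.restrict (Icc (0 : ℝ) T)))
        {p : Ω × ℝ | ν p.2 p.1 ≠ w p.2 p.1})
    (ρ : ℝ) (hρ : ρ ∈ Set.Ioo (0 : ℝ) 1) :
    ρ * Hbar P T Ahat nubar l a φ Ψ Q0 ν + (1 - ρ) * Hbar P T Ahat nubar l a φ Ψ Q0 w
      < Hbar P T Ahat nubar l a φ Ψ Q0
          (fun t ω => ρ * ν t ω + (1 - ρ) * w t ω) := by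
  classical
  obtain ⟨hρ0, hρ1⟩ := hρ
  have hT0 : (0:ℝ) ≤ T := hT.le
  -- replace Q0 by a measurable representative
  obtain ⟨Q0', hQ0'sm, hQ0eq⟩ := hQ0.aestronglyMeasurable
  have hQ0' : MemLp Q0' 2 P := hQ0.ae_eq hQ0eq
  have hHcongr : ∀ F : ℝ → Ω → ℝ, Hbar P T Ahat nubar l a φ Ψ Q0 F
      = Hbar P T Ahat nubar l a φ Ψ Q0' F := by
    intro F
    unfold Hbar
    refine integral_congr_ae ?_
    filter_upwards [hQ0eq] with ω hω
    simp only [inventory, hω]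
  rw [hHcongr ν, hHcongr w, hHcongr (fun t ω => ρ * ν t ω + (1 - ρ) * w t ω)]
  -- notation
  have hmmeas : Measurable (Function.uncurry fun t ω => ρ * ν t ω + (1 - ρ) * w t ω) :=
    ((hνmeas.const_mul ρ).add (hwmeas.const_mul (1 - ρ)))
  -- joint L² facts
  have hνπ : MemLp (fun p : Ω × ℝ => ν p.2 p.1) 2
      (P.prod (volume.restrict (Icc (0:ℝ) T))) := memL2_joint P hT0 hνmeas hν2
  have hwπ : MemLp (fun p : Ω × ℝ => w p.2 p.1) 2
      (P.prod (volume.restrict (Icc (0:ℝ) T))) := memL2_joint P hT0 hwmeas hw2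
  have hmπ : MemLp (fun p : Ω × ℝ => ρ * ν p.2 p.1 + (1 - ρ) * w p.2 p.1) 2
      (P.prod (volume.restrict (Icc (0:ℝ) T))) :=
    (hνπ.const_mul ρ).add (hwπ.const_mul (1 - ρ))
  have hAπ : MemLp (fun p : Ω × ℝ => Ahat p.2 p.1 + l * nubar p.2 p.1) 2
      (P.prod (volume.restrict (Icc (0:ℝ) T))) :=
    (memL2_joint P hT0 hAhatmeas hAhat2).add ((memL2_joint P hT0 hnubarmeas hnubar2).const_mul l)
  have hm2 : (∫⁻ ω, (∫⁻ t in Icc (0 : ℝ) T,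
      ENNReal.ofReal ((ρ * ν t ω + (1 - ρ) * w t ω) ^ 2)) ∂P) < ⊤ := by
    have h := sq_lintegral_of_memL2 hmπ
    rwa [lintegral_prod _ (joint_ofReal_sq_meas hmmeas).aemeasurable] at h
  -- inventory joint L²
  have hqνπ : MemLp (fun p : Ω × ℝ => inventory Q0' ν p.2 p.1) 2
      (P.prod (volume.restrict (Icc (0:ℝ) T))) := inv_memL2 P hT0 hνmeas hQ0'sm hQ0' hν2
  have hqwπ : MemLp (fun p : Ω × ℝ => inventory Q0' w p.2 p.1) 2
      (P.prod (volume.restrict (Icc (0:ℝ) T))) := inv_memL2 P hT0 hwmeas hQ0'sm hQ0' hw2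
  have hqmπ : MemLp (fun p : Ω × ℝ =>
        inventory Q0' (fun t ω => ρ * ν t ω + (1 - ρ) * w t ω) p.2 p.1) 2
      (P.prod (volume.restrict (Icc (0:ℝ) T))) := inv_memL2 P hT0 hmmeas hQ0'sm hQ0' hm2
  -- joint integrability of the three integrands
  have hEν : Integrable (fun p : Ω × ℝ =>
      inventory Q0' ν p.2 p.1 * (Ahat p.2 p.1 + l * nubar p.2 p.1) - a * ν p.2 p.1 ^ 2
        - 2 * Ψ * ν p.2 p.1 * inventory Q0' ν p.2 p.1 - φ * inventory Q0' ν p.2 p.1 ^ 2)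
      (P.prod (volume.restrict (Icc (0:ℝ) T))) := E_int a φ Ψ hqνπ hνπ hAπ
  have hEw : Integrable (fun p : Ω × ℝ =>
      inventory Q0' w p.2 p.1 * (Ahat p.2 p.1 + l * nubar p.2 p.1) - a * w p.2 p.1 ^ 2
        - 2 * Ψ * w p.2 p.1 * inventory Q0' w p.2 p.1 - φ * inventory Q0' w p.2 p.1 ^ 2)
      (P.prod (volume.restrict (Icc (0:ℝ) T))) := E_int a φ Ψ hqwπ hwπ hAπ
  have hEm : Integrable (fun p : Ω × ℝ =>
      inventory Q0' (fun t ω => ρ * ν t ω + (1 - ρ) * w t ω) p.2 p.1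
          * (Ahat p.2 p.1 + l * nubar p.2 p.1)
        - a * (ρ * ν p.2 p.1 + (1 - ρ) * w p.2 p.1) ^ 2
        - 2 * Ψ * (ρ * ν p.2 p.1 + (1 - ρ) * w p.2 p.1)
          * inventory Q0' (fun t ω => ρ * ν t ω + (1 - ρ) * w t ω) p.2 p.1
        - φ * inventory Q0' (fun t ω => ρ * ν t ω + (1 - ρ) * w t ω) p.2 p.1 ^ 2)
      (P.prod (volume.restrict (Icc (0:ℝ) T))) := E_int a φ Ψ hqmπ hmπ hAπ
  -- the ω-integrands of Hbar are integrable
  have hDν : Integrable (fun ω => ∫ t in Icc (0:ℝ) T,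
      (inventory Q0' ν t ω * (Ahat t ω + l * nubar t ω) - a * (ν t ω) ^ 2
        - 2 * Ψ * ν t ω * inventory Q0' ν t ω - φ * (inventory Q0' ν t ω) ^ 2)) P :=
    hEν.integral_prod_left
  have hDw : Integrable (fun ω => ∫ t in Icc (0:ℝ) T,
      (inventory Q0' w t ω * (Ahat t ω + l * nubar t ω) - a * (w t ω) ^ 2
        - 2 * Ψ * w t ω * inventory Q0' w t ω - φ * (inventory Q0' w t ω) ^ 2)) P :=
    hEw.integral_prod_left
  have hDm : Integrable (fun ω => ∫ t in Icc (0:ℝ) T,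
      (inventory Q0' (fun t ω => ρ * ν t ω + (1 - ρ) * w t ω) t ω * (Ahat t ω + l * nubar t ω)
        - a * (ρ * ν t ω + (1 - ρ) * w t ω) ^ 2
        - 2 * Ψ * (ρ * ν t ω + (1 - ρ) * w t ω)
          * inventory Q0' (fun t ω => ρ * ν t ω + (1 - ρ) * w t ω) t ω
        - φ * (inventory Q0' (fun t ω => ρ * ν t ω + (1 - ρ) * w t ω) t ω) ^ 2)) P :=
    hEm.integral_prod_left
  -- per-ω good set and gap inequality
  have hgν := good_ae P hT0 hνmeas hν2
  have hgw := good_ae P hT0 hwmeas hw2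
  have hgA := good_ae P hT0 hAhatmeas hAhat2
  have hgn := good_ae P hT0 hnubarmeas hnubar2
  have hgap : ∀ᵐ ω ∂P,
      ρ * (∫ t in Icc (0:ℝ) T,
          (inventory Q0' ν t ω * (Ahat t ω + l * nubar t ω) - a * (ν t ω) ^ 2
            - 2 * Ψ * ν t ω * inventory Q0' ν t ω - φ * (inventory Q0' ν t ω) ^ 2))
        + (1 - ρ) * (∫ t in Icc (0:ℝ) T,
          (inventory Q0' w t ω * (Ahat t ω + l * nubar t ω) - a * (w t ω) ^ 2
            - 2 * Ψ * w t ω * inventory Q0' w t ω - φ * (inventory Q0' w t ω) ^ 2))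
        + ρ * (1 - ρ) * a * (∫ t in Icc (0:ℝ) T, (ν t ω - w t ω) ^ 2)
      ≤ ∫ t in Icc (0:ℝ) T,
          (inventory Q0' (fun t ω => ρ * ν t ω + (1 - ρ) * w t ω) t ω
              * (Ahat t ω + l * nubar t ω)
            - a * (ρ * ν t ω + (1 - ρ) * w t ω) ^ 2
            - 2 * Ψ * (ρ * ν t ω + (1 - ρ) * w t ω)
              * inventory Q0' (fun t ω => ρ * ν t ω + (1 - ρ) * w t ω) t ω
            - φ * (inventory Q0' (fun t ω => ρ * ν t ω + (1 - ρ) * w t ω) t ω) ^ 2) := by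
    filter_upwards [hgν, hgw, hgA, hgn] with ω h1 h2 h3 h4
    have hA2 : MemLp (fun t => Ahat t ω + l * nubar t ω) 2
        (volume.restrict (Icc (0:ℝ) T)) := h3.add (h4.const_mul l)
    exact det_gap hT0 ha.le hφ hΨ.le hρ0.le hρ1.le (Q0' ω) h1 h2 hA2
  -- integral of the squared difference of controls
  have hδπ : MemLp (fun p : Ω × ℝ => ν p.2 p.1 - w p.2 p.1) 2
      (P.prod (volume.restrict (Icc (0:ℝ) T))) := hνπ.sub hwπ
  have hSδint : Integrable (fun ω => ∫ t in Icc (0:ℝ) T, (ν t ω - w t ω) ^ 2) P :=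
    hδπ.integrable_sq.integral_prod_left
  have hSδeq : (∫ ω, (∫ t in Icc (0:ℝ) T, (ν t ω - w t ω) ^ 2) ∂P)
      = ∫ p, (ν p.2 p.1 - w p.2 p.1) ^ 2 ∂(P.prod (volume.restrict (Icc (0:ℝ) T))) :=
    (integral_prod _ hδπ.integrable_sq).symm
  have hSδpos : 0 < ∫ ω, (∫ t in Icc (0:ℝ) T, (ν t ω - w t ω) ^ 2) ∂P := by
    rw [hSδeq]
    rw [integral_pos_iff_support_of_nonneg (fun p => sq_nonneg _) hδπ.integrable_sq]
    have hss : (Function.support fun p : Ω × ℝ => (ν p.2 p.1 - w p.2 p.1) ^ 2)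
        = {p : Ω × ℝ | ν p.2 p.1 ≠ w p.2 p.1} := by
      ext p
      simp [Function.mem_support, sub_eq_zero, pow_eq_zero_iff]
    rw [hss]
    exact hdiff
  -- assemble
  have hL1 : Integrable (fun ω => ρ * (∫ t in Icc (0:ℝ) T,
      (inventory Q0' ν t ω * (Ahat t ω + l * nubar t ω) - a * (ν t ω) ^ 2
        - 2 * Ψ * ν t ω * inventory Q0' ν t ω - φ * (inventory Q0' ν t ω) ^ 2))) P :=
    hDν.const_mul ρ
  have hL2 : Integrable (fun ω => (1 - ρ) * (∫ t in Icc (0:ℝ) T,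
      (inventory Q0' w t ω * (Ahat t ω + l * nubar t ω) - a * (w t ω) ^ 2
        - 2 * Ψ * w t ω * inventory Q0' w t ω - φ * (inventory Q0' w t ω) ^ 2))) P :=
    hDw.const_mul (1 - ρ)
  have hL3 : Integrable (fun ω =>
      ρ * (1 - ρ) * a * (∫ t in Icc (0:ℝ) T, (ν t ω - w t ω) ^ 2)) P :=
    hSδint.const_mul (ρ * (1 - ρ) * a)
  have hL12 : Integrable (fun ω => ρ * (∫ t in Icc (0:ℝ) T,
      (inventory Q0' ν t ω * (Ahat t ω + l * nubar t ω) - a * (ν t ω) ^ 2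
        - 2 * Ψ * ν t ω * inventory Q0' ν t ω - φ * (inventory Q0' ν t ω) ^ 2))
      + (1 - ρ) * (∫ t in Icc (0:ℝ) T,
      (inventory Q0' w t ω * (Ahat t ω + l * nubar t ω) - a * (w t ω) ^ 2
        - 2 * Ψ * w t ω * inventory Q0' w t ω - φ * (inventory Q0' w t ω) ^ 2))) P :=
    hL1.add hL2
  have hLtot : Integrable (fun ω => ρ * (∫ t in Icc (0:ℝ) T,
      (inventory Q0' ν t ω * (Ahat t ω + l * nubar t ω) - a * (ν t ω) ^ 2
        - 2 * Ψ * ν t ω * inventory Q0' ν t ω - φ * (inventory Q0' ν t ω) ^ 2))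
      + (1 - ρ) * (∫ t in Icc (0:ℝ) T,
      (inventory Q0' w t ω * (Ahat t ω + l * nubar t ω) - a * (w t ω) ^ 2
        - 2 * Ψ * w t ω * inventory Q0' w t ω - φ * (inventory Q0' w t ω) ^ 2))
      + ρ * (1 - ρ) * a * (∫ t in Icc (0:ℝ) T, (ν t ω - w t ω) ^ 2)) P := hL12.add hL3
  have hmono := integral_mono_ae hLtot hDm hgap
  rw [integral_add hL12 hL3, integral_add hL1 hL2,
    integral_const_mul, integral_const_mul, integral_const_mul] at hmono
  have hHν : Hbar P T Ahat nubar l a φ Ψ Q0' ν = ∫ ω, (∫ t in Icc (0:ℝ) T,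
      (inventory Q0' ν t ω * (Ahat t ω + l * nubar t ω) - a * (ν t ω) ^ 2
        - 2 * Ψ * ν t ω * inventory Q0' ν t ω - φ * (inventory Q0' ν t ω) ^ 2)) ∂P := rfl
  have hHw : Hbar P T Ahat nubar l a φ Ψ Q0' w = ∫ ω, (∫ t in Icc (0:ℝ) T,
      (inventory Q0' w t ω * (Ahat t ω + l * nubar t ω) - a * (w t ω) ^ 2
        - 2 * Ψ * w t ω * inventory Q0' w t ω - φ * (inventory Q0' w t ω) ^ 2)) ∂P := rfl
  have hHm : Hbar P T Ahat nubar l a φ Ψ Q0' (fun t ω => ρ * ν t ω + (1 - ρ) * w t ω)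
      = ∫ ω, (∫ t in Icc (0:ℝ) T,
      (inventory Q0' (fun t ω => ρ * ν t ω + (1 - ρ) * w t ω) t ω * (Ahat t ω + l * nubar t ω)
        - a * (ρ * ν t ω + (1 - ρ) * w t ω) ^ 2
        - 2 * Ψ * (ρ * ν t ω + (1 - ρ) * w t ω)
          * inventory Q0' (fun t ω => ρ * ν t ω + (1 - ρ) * w t ω) t ω
        - φ * (inventory Q0' (fun t ω => ρ * ν t ω + (1 - ρ) * w t ω) t ω) ^ 2)) ∂P := rfl
  rw [hHν, hHw, hHm]
  have hpos : 0 < ρ * (1 - ρ) * a * ∫ ω, (∫ t in Icc (0:ℝ) T, (ν t ω - w t ω) ^ 2) ∂P := by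
    have : 0 < ρ * (1 - ρ) * a := mul_pos (mul_pos hρ0 (by linarith)) ha
    exact mul_pos this hSδpos
  linarith
end

section
/- The functional H̄ is everywhere Gâteaux differentiable on H²_T: for any ν, ω ∈ H²_T, writing r^ω_t = ∫₀^t ω_u du, the limit lim_{ε→0} (H̄(ν + εω) − H̄(ν))/ε exists and equals E[∫₀^T ( r^ω_t (Â_t + λ ν̄_t) − 2( a ν_t ω_t + Ψ(ν_t r^ω_t + ω_t q^ν_t) + φ q^ν_t r^ω_t ) ) dt ]. -/
open MeasureTheory Set Filter
open scoped ENNReal Topology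

section StmtFourAux

variable {Ω : Type*} [MeasurableSpace Ω]

private lemma enn_sq (x : ℝ) : (‖x‖₊ : ℝ≥0∞) ^ 2 = ENNReal.ofReal (x ^ 2) := by
  rw [← sq_abs, ENNReal.ofReal_pow (abs_nonneg x), ← Real.enorm_eq_ofReal (abs_nonneg x),
    Real.enorm_abs]
  rfl

private lemma mul_int {μ : Measure Ω} {f g : Ω → ℝ} (hf : MemLp f 2 μ) (hg : MemLp g 2 μ) :
    Integrable (fun x => f x * g x) μ := by
  refine Integrable.mono' ((hf.integrable_sq.add hg.integrable_sq).const_mul (1/2))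
    (hf.1.mul hg.1) ?_
  filter_upwards with x
  simp only [Pi.add_apply]
  rw [Real.norm_eq_abs, abs_mul]
  nlinarith [abs_nonneg (f x), abs_nonneg (g x), sq_abs (f x), sq_abs (g x),
    sq_nonneg (|f x| - |g x|)]

private lemma measR {χ : ℝ → Ω → ℝ} (hχ : Measurable (Function.uncurry χ)) :
    StronglyMeasurable (fun z : Ω × ℝ => ∫ u in Ioc (0:ℝ) z.2, χ u z.1) := by
  have h1 : (fun z : Ω × ℝ => ∫ u in Ioc (0:ℝ) z.2, χ u z.1)
      = fun z : Ω × ℝ => ∫ u, (Ioc (0:ℝ) z.2).indicator (fun u => χ u z.1) u := by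
    funext z; rw [integral_indicator measurableSet_Ioc]
  rw [h1]
  apply MeasureTheory.StronglyMeasurable.integral_prod_right'
    (f := fun p : (Ω × ℝ) × ℝ => (Ioc (0:ℝ) p.1.2).indicator (fun u => χ u p.1.1) p.2)
  apply Measurable.stronglyMeasurable
  have h2 : (fun p : (Ω × ℝ) × ℝ => (Ioc (0:ℝ) p.1.2).indicator (fun u => χ u p.1.1) p.2)
      = fun p => if 0 < p.2 ∧ p.2 ≤ p.1.2 then χ p.2 p.1.1 else 0 := by
    funext p; simp [Set.indicator, Set.mem_Ioc]
  rw [h2]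
  refine Measurable.ite ?_ ?_ measurable_const
  · exact ((measurableSet_lt measurable_const measurable_snd).inter
      (measurableSet_le measurable_snd measurable_fst.snd))
  · exact hχ.comp (measurable_snd.prodMk measurable_fst.fst)

private lemma memL2_section {P : Measure Ω} [IsProbabilityMeasure P] {T : ℝ}
    {χ : ℝ → Ω → ℝ} (hχ : Measurable (Function.uncurry χ))
    (h2 : (∫⁻ ω, (∫⁻ t in Icc (0 : ℝ) T, ENNReal.ofReal ((χ t ω) ^ 2)) ∂P) < ⊤) :
    MemLp (fun z : Ω × ℝ => χ z.2 z.1) 2 (P.prod (volume.restrict (Icc (0:ℝ) T))) := by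
  have hm : Measurable (fun z : Ω × ℝ => χ z.2 z.1) :=
    hχ.comp (measurable_snd.prodMk measurable_fst)
  rw [memLp_two_iff_integrable_sq hm.aestronglyMeasurable]
  refine ⟨(hm.pow_const 2).aestronglyMeasurable, ?_⟩
  rw [hasFiniteIntegral_iff_ofReal (Eventually.of_forall fun z => sq_nonneg _)]
  rw [lintegral_prod (fun z : Ω × ℝ => ENNReal.ofReal (χ z.2 z.1 ^ 2))
    (ENNReal.measurable_ofReal.comp (hm.pow_const 2)).aemeasurable]
  exact h2

private lemma memL2_Q0 {P : Measure Ω} [IsProbabilityMeasure P] {T : ℝ}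
    {Q0 : Ω → ℝ} (hQ0 : MemLp Q0 2 P) :
    MemLp (fun z : Ω × ℝ => Q0 z.1) 2 (P.prod (volume.restrict (Icc (0:ℝ) T))) := by
  have hae : AEStronglyMeasurable (fun z : Ω × ℝ => Q0 z.1)
      (P.prod (volume.restrict (Icc (0:ℝ) T))) :=
    hQ0.1.comp_quasiMeasurePreserving Measure.quasiMeasurePreserving_fst
  rw [memLp_two_iff_integrable_sq hae]
  have hQ2 : Integrable (fun ω => Q0 ω ^ 2) P := hQ0.integrable_sq
  have haemP : AEMeasurable (fun ω => ENNReal.ofReal (Q0 ω ^ 2)) P :=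
    ENNReal.measurable_ofReal.comp_aemeasurable hQ2.aemeasurable
  have haem : AEMeasurable (fun z : Ω × ℝ => ENNReal.ofReal (Q0 z.1 ^ 2))
      (P.prod (volume.restrict (Icc (0:ℝ) T))) :=
    haemP.comp_quasiMeasurePreserving Measure.quasiMeasurePreserving_fst
  have haesq : AEStronglyMeasurable (fun z : Ω × ℝ => Q0 z.1 ^ 2)
      (P.prod (volume.restrict (Icc (0:ℝ) T))) := by
    have : (fun z : Ω × ℝ => Q0 z.1 ^ 2) = fun z => Q0 z.1 * Q0 z.1 := by
      funext z; ring
    rw [this]; exact hae.mul hae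
  refine ⟨haesq, ?_⟩
  rw [hasFiniteIntegral_iff_ofReal (Eventually.of_forall fun z => sq_nonneg _)]
  rw [lintegral_prod (fun z : Ω × ℝ => ENNReal.ofReal (Q0 z.1 ^ 2)) haem]
  have hfin : (∫⁻ ω, ENNReal.ofReal (Q0 ω ^ 2) ∂P) < ⊤ := by
    rw [← hasFiniteIntegral_iff_ofReal (Eventually.of_forall fun ω => sq_nonneg _)]
    exact hQ2.hasFiniteIntegral
  calc (∫⁻ ω, ∫⁻ t in Icc (0:ℝ) T, ENNReal.ofReal (Q0 ω ^ 2) ∂volume ∂P)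
      = ∫⁻ ω, ENNReal.ofReal (Q0 ω ^ 2) * ENNReal.ofReal T ∂P := by
        refine lintegral_congr fun ω => ?_
        rw [setLIntegral_const, Real.volume_Icc, sub_zero]
    _ = (∫⁻ ω, ENNReal.ofReal (Q0 ω ^ 2) ∂P) * ENNReal.ofReal T := by
        rw [lintegral_mul_const'' _ haemP]
    _ < ⊤ := ENNReal.mul_lt_top hfin ENNReal.ofReal_lt_top

private lemma ae_integrableOn {P : Measure Ω} {T : ℝ}
    {χ : ℝ → Ω → ℝ} (hχ : Measurable (Function.uncurry χ))
    (h2 : (∫⁻ ω, (∫⁻ t in Icc (0 : ℝ) T, ENNReal.ofReal ((χ t ω) ^ 2)) ∂P) < ⊤) :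
    ∀ᵐ ω ∂P, IntegrableOn (fun u => χ u ω) (Icc (0:ℝ) T) volume := by
  haveI : IsFiniteMeasure (volume.restrict (Icc (0:ℝ) T)) :=
    ⟨by rw [Measure.restrict_apply_univ]; exact measure_Icc_lt_top⟩
  have hm : Measurable (fun z : Ω × ℝ => χ z.2 z.1) :=
    hχ.comp (measurable_snd.prodMk measurable_fst)
  have hgmeas : Measurable (fun ω => ∫⁻ t in Icc (0:ℝ) T, ENNReal.ofReal (χ t ω ^ 2)) := by
    apply Measurable.lintegral_prod_right'
      (f := fun z : Ω × ℝ => ENNReal.ofReal (χ z.2 z.1 ^ 2))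
    exact ENNReal.measurable_ofReal.comp (hm.pow_const 2)
  filter_upwards [ae_lt_top hgmeas h2.ne] with ω hω
  have hms : Measurable (fun u => χ u ω) :=
    hχ.comp (measurable_id.prodMk measurable_const)
  have hmem : MemLp (fun u => χ u ω) 2 (volume.restrict (Icc (0:ℝ) T)) := by
    rw [memLp_two_iff_integrable_sq hms.aestronglyMeasurable]
    refine ⟨(hms.pow_const 2).aestronglyMeasurable, ?_⟩
    rw [hasFiniteIntegral_iff_ofReal (Eventually.of_forall fun u => sq_nonneg _)]
    exact hω
  exact hmem.integrable one_le_two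

private lemma memL2_R {P : Measure Ω} [IsProbabilityMeasure P] {T : ℝ} (hT : 0 < T)
    {χ : ℝ → Ω → ℝ} (hχ : Measurable (Function.uncurry χ))
    (h2 : (∫⁻ ω, (∫⁻ t in Icc (0 : ℝ) T, ENNReal.ofReal ((χ t ω) ^ 2)) ∂P) < ⊤) :
    MemLp (fun z : Ω × ℝ => ∫ u in Ioc (0:ℝ) z.2, χ u z.1) 2
      (P.prod (volume.restrict (Icc (0:ℝ) T))) := by
  have hm : Measurable (fun z : Ω × ℝ => χ z.2 z.1) :=
    hχ.comp (measurable_snd.prodMk measurable_fst)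
  have hsm := measR hχ
  set g : Ω → ℝ≥0∞ := fun ω => ∫⁻ u in Icc (0:ℝ) T, ENNReal.ofReal (χ u ω ^ 2) with hgdef
  have hgmeas : Measurable g := by
    apply Measurable.lintegral_prod_right'
      (f := fun z : Ω × ℝ => ENNReal.ofReal (χ z.2 z.1 ^ 2))
    exact ENNReal.measurable_ofReal.comp (hm.pow_const 2)
  have hbound : ∀ ω : Ω, ∀ t ∈ Icc (0:ℝ) T,
      (‖∫ u in Ioc (0:ℝ) t, χ u ω‖₊ : ℝ≥0∞) ^ 2 ≤ ENNReal.ofReal T * g ω := by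
    intro ω t ht
    have h1 : (‖∫ u in Ioc (0:ℝ) t, χ u ω‖₊ : ℝ≥0∞)
        ≤ ∫⁻ u in Icc (0:ℝ) T, (‖χ u ω‖₊ : ℝ≥0∞) := by
      refine le_trans (enorm_integral_le_lintegral_enorm _) ?_
      exact lintegral_mono_set (Ioc_subset_Icc_self.trans (Icc_subset_Icc_right ht.2))
    have hconj : Real.HolderConjugate 2 2 := Real.HolderConjugate.two_two
    have h2' := ENNReal.lintegral_mul_le_Lp_mul_Lq (volume.restrict (Icc (0:ℝ) T)) hconj
      (f := fun u => (‖χ u ω‖₊ : ℝ≥0∞)) (g := fun _ => 1)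
      ((hχ.comp (measurable_id.prodMk measurable_const)).enorm.aemeasurable)
      aemeasurable_const
    simp only [Pi.mul_apply, mul_one, ENNReal.one_rpow] at h2'
    have hrw2 : (∫⁻ u in Icc (0:ℝ) T, (‖χ u ω‖₊ : ℝ≥0∞) ^ (2:ℝ)) = g ω := by
      refine lintegral_congr fun u => ?_
      rw [show ((2:ℝ) = ((2:ℕ):ℝ)) by norm_num, ENNReal.rpow_natCast, enn_sq]
    have hrw3 : (∫⁻ _ in Icc (0:ℝ) T, (1:ℝ≥0∞)) = ENNReal.ofReal T := by
      simp [Real.volume_Icc, hT.le]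
    rw [hrw2, hrw3] at h2'
    have h12 := h1.trans h2'
    have hsq := mul_le_mul' h12 h12
    calc (‖∫ u in Ioc (0:ℝ) t, χ u ω‖₊ : ℝ≥0∞) ^ 2
        = (‖∫ u in Ioc (0:ℝ) t, χ u ω‖₊ : ℝ≥0∞) * (‖∫ u in Ioc (0:ℝ) t, χ u ω‖₊ : ℝ≥0∞) := sq _
      _ ≤ (g ω ^ (1/2:ℝ) * ENNReal.ofReal T ^ (1/2:ℝ))
          * (g ω ^ (1/2:ℝ) * ENNReal.ofReal T ^ (1/2:ℝ)) := hsq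
      _ = (g ω ^ (1/2:ℝ) * g ω ^ (1/2:ℝ))
          * (ENNReal.ofReal T ^ (1/2:ℝ) * ENNReal.ofReal T ^ (1/2:ℝ)) := by ring
      _ = ENNReal.ofReal T * g ω := by
          rw [← ENNReal.rpow_add_of_nonneg _ _ (by norm_num) (by norm_num),
            ← ENNReal.rpow_add_of_nonneg _ _ (by norm_num) (by norm_num)]
          norm_num [mul_comm]
  rw [memLp_two_iff_integrable_sq hsm.aestronglyMeasurable]
  refine ⟨((hsm.measurable.pow_const 2).aestronglyMeasurable), ?_⟩
  rw [hasFiniteIntegral_iff_ofReal (Eventually.of_forall fun z => sq_nonneg _)]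
  rw [lintegral_prod (fun z : Ω × ℝ => ENNReal.ofReal ((∫ u in Ioc (0:ℝ) z.2, χ u z.1) ^ 2))
    (ENNReal.measurable_ofReal.comp (hsm.measurable.pow_const 2)).aemeasurable]
  calc (∫⁻ ω, ∫⁻ t in Icc (0:ℝ) T, ENNReal.ofReal ((∫ u in Ioc (0:ℝ) t, χ u ω) ^ 2) ∂volume ∂P)
      ≤ ∫⁻ ω, ∫⁻ _ in Icc (0:ℝ) T, (ENNReal.ofReal T * g ω) ∂volume ∂P := by
        refine lintegral_mono fun ω => ?_
        refine lintegral_mono_ae ?_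
        filter_upwards [ae_restrict_mem measurableSet_Icc] with t ht
        rw [← enn_sq]
        exact hbound ω t ht
    _ = ∫⁻ ω, ENNReal.ofReal T * (ENNReal.ofReal T * g ω) ∂P := by
        refine lintegral_congr fun ω => ?_
        rw [setLIntegral_const, Real.volume_Icc, sub_zero, mul_comm]
    _ = ENNReal.ofReal T * ∫⁻ ω, ENNReal.ofReal T * g ω ∂P := by
        rw [lintegral_const_mul _ (hgmeas.const_mul _)]
    _ = ENNReal.ofReal T * (ENNReal.ofReal T * ∫⁻ ω, g ω ∂P) := by
        rw [lintegral_const_mul _ hgmeas]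
    _ < ⊤ := ENNReal.mul_lt_top ENNReal.ofReal_lt_top
          (ENNReal.mul_lt_top ENNReal.ofReal_lt_top h2)

private lemma iter_eq {P : Measure Ω} [SFinite P] {m : Measure ℝ} [SFinite m]
    {f : Ω → ℝ → ℝ} {g : Ω × ℝ → ℝ} (hg : Integrable g (P.prod m))
    (hfg : g =ᵐ[P.prod m] Function.uncurry f) :
    (∫ ω, ∫ t, f ω t ∂m ∂P) = ∫ z, g z ∂(P.prod m) := by
  rw [MeasureTheory.integral_integral (hg.congr hfg)]
  exact (integral_congr_ae hfg).symm

end StmtFourAux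

/-- `H̄` is everywhere Gâteaux differentiable on `H²_T`: for `ν, ω ∈ H²_T`,
with `r^ω_t = ∫₀ᵗ ω_u du`, the limit of `(H̄(ν + εω) − H̄(ν))/ε` as `ε → 0` exists and equals
`E[∫₀ᵀ ( r^ω_t (Â_t + λν̄_t) − 2(a ν_t ω_t + Ψ(ν_t r^ω_t + ω_t q^ν_t) + φ q^ν_t r^ω_t) ) dt]`. -/
theorem stmt_4 {Ω : Type*} {m0 : MeasurableSpace Ω} (P : Measure Ω) [IsProbabilityMeasure P]
    (T : ℝ) (hT : 0 < T)
    (Ahat nubar : ℝ → Ω → ℝ)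
    (hAhatmeas : Measurable (Function.uncurry Ahat))
    (hnubarmeas : Measurable (Function.uncurry nubar))
    (hAhat2 : (∫⁻ ω, (∫⁻ t in Icc (0 : ℝ) T, ENNReal.ofReal ((Ahat t ω) ^ 2)) ∂P) < ⊤)
    (hnubar2 : (∫⁻ ω, (∫⁻ t in Icc (0 : ℝ) T, ENNReal.ofReal ((nubar t ω) ^ 2)) ∂P) < ⊤)
    (l a φ Ψ : ℝ) (ha : 0 < a) (hφ : 0 ≤ φ) (hΨ : 0 < Ψ)
    (Q0 : Ω → ℝ) (hQ0 : MemLp Q0 2 P)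
    (ν w : ℝ → Ω → ℝ)
    (hνmeas : Measurable (Function.uncurry ν))
    (hwmeas : Measurable (Function.uncurry w))
    (hν2 : (∫⁻ ω, (∫⁻ t in Icc (0 : ℝ) T, ENNReal.ofReal ((ν t ω) ^ 2)) ∂P) < ⊤)
    (hw2 : (∫⁻ ω, (∫⁻ t in Icc (0 : ℝ) T, ENNReal.ofReal ((w t ω) ^ 2)) ∂P) < ⊤) :
    Tendsto
      (fun ε : ℝ =>
        (Hbar P T Ahat nubar l a φ Ψ Q0 (fun t ω => ν t ω + ε * w t ω)
            - Hbar P T Ahat nubar l a φ Ψ Q0 ν) / ε)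
      (𝓝[≠] (0 : ℝ))
      (𝓝 (∫ ω, (∫ t in Icc (0 : ℝ) T,
        ((∫ u in (0 : ℝ)..t, w u ω) * (Ahat t ω + l * nubar t ω)
          - 2 * (a * ν t ω * w t ω
            + Ψ * (ν t ω * (∫ u in (0 : ℝ)..t, w u ω) + w t ω * inventory Q0 ν t ω)
            + φ * inventory Q0 ν t ω * (∫ u in (0 : ℝ)..t, w u ω)))) ∂P)) := by
  haveI : IsFiniteMeasure (volume.restrict (Icc (0:ℝ) T)) :=
    ⟨by rw [Measure.restrict_apply_univ]; exact measure_Icc_lt_top⟩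
  set μ : Measure (Ω × ℝ) := P.prod (volume.restrict (Icc (0:ℝ) T)) with hμdef
  have hA2 : MemLp (fun z : Ω × ℝ => Ahat z.2 z.1) 2 μ := memL2_section hAhatmeas hAhat2
  have hN2 : MemLp (fun z : Ω × ℝ => nubar z.2 z.1) 2 μ := memL2_section hnubarmeas hnubar2
  have hV2 : MemLp (fun z : Ω × ℝ => ν z.2 z.1) 2 μ := memL2_section hνmeas hν2
  have hW2 : MemLp (fun z : Ω × ℝ => w z.2 z.1) 2 μ := memL2_section hwmeas hw2
  have hRν2 : MemLp (fun z : Ω × ℝ => ∫ u in Ioc (0:ℝ) z.2, ν u z.1) 2 μ :=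
    memL2_R hT hνmeas hν2
  have hRw2 : MemLp (fun z : Ω × ℝ => ∫ u in Ioc (0:ℝ) z.2, w u z.1) 2 μ :=
    memL2_R hT hwmeas hw2
  have hQ2 : MemLp (fun z : Ω × ℝ => Q0 z.1) 2 μ := memL2_Q0 hQ0
  have hq2 : MemLp (fun z : Ω × ℝ => Q0 z.1 + ∫ u in Ioc (0:ℝ) z.2, ν u z.1) 2 μ :=
    hQ2.add hRν2
  have hA'2 : MemLp (fun z : Ω × ℝ => Ahat z.2 z.1 + l * nubar z.2 z.1) 2 μ :=
    hA2.add (hN2.const_mul l)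
  set q : Ω × ℝ → ℝ := fun z => Q0 z.1 + ∫ u in Ioc (0:ℝ) z.2, ν u z.1 with hqdef
  set r : Ω × ℝ → ℝ := fun z => ∫ u in Ioc (0:ℝ) z.2, w u z.1 with hrdef
  set A' : Ω × ℝ → ℝ := fun z => Ahat z.2 z.1 + l * nubar z.2 z.1 with hA'def
  set F0 : Ω × ℝ → ℝ := fun z => q z * A' z - a * (ν z.2 z.1) ^ 2
      - 2 * Ψ * (ν z.2 z.1) * q z - φ * (q z) ^ 2 with hF0def
  set G : Ω × ℝ → ℝ := fun z => r z * A' z - 2 * (a * ν z.2 z.1 * w z.2 z.1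
      + Ψ * (ν z.2 z.1 * r z + w z.2 z.1 * q z) + φ * q z * r z) with hGdef
  set K : Ω × ℝ → ℝ := fun z => -(a * (w z.2 z.1) ^ 2) - 2 * Ψ * (w z.2 z.1) * r z
      - φ * (r z) ^ 2 with hKdef
  have hF0i : Integrable F0 μ := by
    refine ((((mul_int hq2 hA'2).sub ((mul_int hV2 hV2).const_mul a)).sub
      ((mul_int hV2 hq2).const_mul (2*Ψ))).sub ((mul_int hq2 hq2).const_mul φ)).congr
      (Eventually.of_forall fun z => ?_)
    simp only [hF0def, Pi.sub_apply, Pi.add_apply, Pi.neg_apply]; ring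
  have hGi : Integrable G μ := by
    refine (((((mul_int hRw2 hA'2).sub ((mul_int hV2 hW2).const_mul (2*a))).sub
      ((mul_int hV2 hRw2).const_mul (2*Ψ))).sub ((mul_int hW2 hq2).const_mul (2*Ψ))).sub
      ((mul_int hq2 hRw2).const_mul (2*φ))).congr (Eventually.of_forall fun z => ?_)
    simp only [hGdef, Pi.sub_apply, Pi.add_apply, Pi.neg_apply]; ring
  have hKi : Integrable K μ := by
    refine ((((mul_int hW2 hW2).const_mul (-a)).sub ((mul_int hW2 hRw2).const_mul (2*Ψ))).sub
      ((mul_int hRw2 hRw2).const_mul φ)).congr (Eventually.of_forall fun z => ?_)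
    simp only [hKdef, Pi.sub_apply, Pi.add_apply, Pi.neg_apply]; ring
  have hgood : ∀ᵐ z ∂μ, z.2 ∈ Icc (0:ℝ) T
      ∧ IntegrableOn (fun u => ν u z.1) (Icc (0:ℝ) T) volume
      ∧ IntegrableOn (fun u => w u z.1) (Icc (0:ℝ) T) volume := by
    have h1 : ∀ᵐ z ∂μ, z.2 ∈ Icc (0:ℝ) T :=
      Measure.quasiMeasurePreserving_snd.tendsto_ae.eventually
        (ae_restrict_mem measurableSet_Icc)
    have h2 : ∀ᵐ z ∂μ, IntegrableOn (fun u => ν u z.1) (Icc (0:ℝ) T) volume :=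
      Measure.quasiMeasurePreserving_fst.tendsto_ae.eventually (ae_integrableOn hνmeas hν2)
    have h3 : ∀ᵐ z ∂μ, IntegrableOn (fun u => w u z.1) (Icc (0:ℝ) T) volume :=
      Measure.quasiMeasurePreserving_fst.tendsto_ae.eventually (ae_integrableOn hwmeas hw2)
    filter_upwards [h1, h2, h3] with z hz1 hz2 hz3 using ⟨hz1, hz2, hz3⟩
  have hexp : ∀ (ε : ℝ), ∀ z : Ω × ℝ, z.2 ∈ Icc (0:ℝ) T →
      IntegrableOn (fun u => ν u z.1) (Icc (0:ℝ) T) volume →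
      IntegrableOn (fun u => w u z.1) (Icc (0:ℝ) T) volume →
      inventory Q0 (fun t ω => ν t ω + ε * w t ω) z.2 z.1 = q z + ε * r z
        ∧ inventory Q0 ν z.2 z.1 = q z
        ∧ (∫ u in (0:ℝ)..z.2, w u z.1) = r z := by
    intro ε z ht hIν hIw
    have hsub : Ioc (0:ℝ) z.2 ⊆ Icc (0:ℝ) T :=
      Ioc_subset_Icc_self.trans (Icc_subset_Icc_right ht.2)
    have hiiν : IntervalIntegrable (fun u => ν u z.1) volume 0 z.2 := by
      rw [intervalIntegrable_iff_integrableOn_Ioc_of_le ht.1]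
      exact hIν.mono_set hsub
    have hiiw : IntervalIntegrable (fun u => w u z.1) volume 0 z.2 := by
      rw [intervalIntegrable_iff_integrableOn_Ioc_of_le ht.1]
      exact hIw.mono_set hsub
    refine ⟨?_, ?_, ?_⟩
    · simp only [inventory]
      have hadd : (∫ u in (0:ℝ)..z.2, (ν u z.1 + ε * w u z.1))
          = (∫ u in (0:ℝ)..z.2, ν u z.1) + ε * ∫ u in (0:ℝ)..z.2, w u z.1 := by
        rw [intervalIntegral.integral_add hiiν (hiiw.const_mul ε),
          intervalIntegral.integral_const_mul]
      rw [hadd, intervalIntegral.integral_of_le ht.1,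
        intervalIntegral.integral_of_le (μ := volume) (f := fun u => w u z.1) ht.1,
        hqdef, hrdef]
      ring
    · simp only [inventory]
      rw [intervalIntegral.integral_of_le ht.1, hqdef]
    · rw [intervalIntegral.integral_of_le ht.1, hrdef]
  have key : ∀ ε : ℝ, Hbar P T Ahat nubar l a φ Ψ Q0 (fun t ω => ν t ω + ε * w t ω)
      = (∫ z, F0 z ∂μ) + ε * (∫ z, G z ∂μ) + ε ^ 2 * (∫ z, K z ∂μ) := by
    intro ε
    have haeε : (fun z : Ω × ℝ => F0 z + ε * G z + ε ^ 2 * K z) =ᵐ[μ]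
        Function.uncurry (fun ω t =>
          (inventory Q0 (fun t ω => ν t ω + ε * w t ω) t ω * (Ahat t ω + l * nubar t ω)
            - a * (ν t ω + ε * w t ω) ^ 2
            - 2 * Ψ * (ν t ω + ε * w t ω) *
                inventory Q0 (fun t ω => ν t ω + ε * w t ω) t ω
            - φ * (inventory Q0 (fun t ω => ν t ω + ε * w t ω) t ω) ^ 2)) := by
      filter_upwards [hgood] with z hz
      obtain ⟨ht, hIν, hIw⟩ := hz
      obtain ⟨he1, he2, he3⟩ := hexp ε z ht hIν hIw
      simp only [Function.uncurry]
      rw [he1]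
      simp only [hF0def, hGdef, hKdef, hA'def]
      ring
    have hIfull : Integrable (fun z : Ω × ℝ => F0 z + ε * G z + ε ^ 2 * K z) μ :=
      (hF0i.add (hGi.const_mul ε)).add (hKi.const_mul (ε ^ 2))
    simp only [Hbar]
    rw [hμdef] at haeε hIfull ⊢
    rw [iter_eq hIfull haeε]
    rw [← hμdef]
    have h1 : Integrable (fun z : Ω × ℝ => ε * G z) μ := hGi.const_mul ε
    have h2 : Integrable (fun z : Ω × ℝ => ε ^ 2 * K z) μ := hKi.const_mul (ε ^ 2)
    have h3 : Integrable (fun z : Ω × ℝ => F0 z + ε * G z) μ := hF0i.add h1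
    rw [integral_add h3 h2, integral_add hF0i h1, integral_const_mul, integral_const_mul]
  have key0 : Hbar P T Ahat nubar l a φ Ψ Q0 ν = ∫ z, F0 z ∂μ := by
    have hae0 : F0 =ᵐ[μ]
        Function.uncurry (fun ω t =>
          (inventory Q0 ν t ω * (Ahat t ω + l * nubar t ω) - a * (ν t ω) ^ 2
            - 2 * Ψ * ν t ω * inventory Q0 ν t ω - φ * (inventory Q0 ν t ω) ^ 2)) := by
      filter_upwards [hgood] with z hz
      obtain ⟨ht, hIν, hIw⟩ := hz
      obtain ⟨he1, he2, he3⟩ := hexp 0 z ht hIν hIw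
      simp only [Function.uncurry]
      rw [he2]
      try simp only [hF0def, hA'def]
      try ring
    simp only [Hbar]
    rw [hμdef] at hae0 hF0i ⊢
    rw [iter_eq hF0i hae0]
  have htgt : (∫ ω, (∫ t in Icc (0 : ℝ) T,
        ((∫ u in (0 : ℝ)..t, w u ω) * (Ahat t ω + l * nubar t ω)
          - 2 * (a * ν t ω * w t ω
            + Ψ * (ν t ω * (∫ u in (0 : ℝ)..t, w u ω) + w t ω * inventory Q0 ν t ω)
            + φ * inventory Q0 ν t ω * (∫ u in (0 : ℝ)..t, w u ω)))) ∂P)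
      = ∫ z, G z ∂μ := by
    have haeG : G =ᵐ[μ]
        Function.uncurry (fun ω t =>
          ((∫ u in (0 : ℝ)..t, w u ω) * (Ahat t ω + l * nubar t ω)
          - 2 * (a * ν t ω * w t ω
            + Ψ * (ν t ω * (∫ u in (0 : ℝ)..t, w u ω) + w t ω * inventory Q0 ν t ω)
            + φ * inventory Q0 ν t ω * (∫ u in (0 : ℝ)..t, w u ω)))) := by
      filter_upwards [hgood] with z hz
      obtain ⟨ht, hIν, hIw⟩ := hz
      obtain ⟨he1, he2, he3⟩ := hexp 0 z ht hIν hIw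
      simp only [Function.uncurry]
      rw [he2, he3]
      try simp only [hGdef, hA'def]
      try ring
    rw [hμdef] at haeG hGi ⊢
    rw [iter_eq hGi haeG]
  rw [htgt]
  have heq : (fun ε : ℝ =>
      (Hbar P T Ahat nubar l a φ Ψ Q0 (fun t ω => ν t ω + ε * w t ω)
        - Hbar P T Ahat nubar l a φ Ψ Q0 ν) / ε)
      =ᶠ[𝓝[≠] (0:ℝ)] fun ε => (∫ z, G z ∂μ) + ε * (∫ z, K z ∂μ) := by
    filter_upwards [self_mem_nhdsWithin] with ε hε
    have hε' : (ε : ℝ) ≠ 0 := hε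
    rw [key ε, key0]
    field_simp
    ring
  refine Tendsto.congr' heq.symm ?_
  have h0 : Tendsto (fun ε : ℝ => (∫ z, G z ∂μ) + ε * (∫ z, K z ∂μ)) (𝓝 0)
      (𝓝 ((∫ z, G z ∂μ) + 0 * (∫ z, K z ∂μ))) :=
    (continuous_const.add (continuous_id.mul continuous_const)).tendsto 0
  simpa using h0.mono_left nhdsWithin_le_nhds
end
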